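/- For any k ∈ [1, n-1], the set P^k_+ = {x ∈ R^n : s^+(x) ≤ k-1} equals the topological interior of P^k_- = {x ∈ R^n : s^-(x) ≤ k-1}. -/

import Mathlib

/-- Number of sign changes in a list of reals: the number of adjacent pairs
with strictly opposite signs. -/
noncomputable def signChanges (l : List ℝ) : ℕ :=
  ((l.zip l.tail).filter (fun p => decide (p.1 * p.2 < 0))).length

/-- `s^-(x)`: sign changes after deleting all zero entries. -/
noncomputable def sMinus (n : ℕ) (x : Fin n → ℝ) : ℕ :=
  signChanges (((List.finRange n).map x).filter (fun a => decide (a ≠ 0)))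

/-- `s^+(x)`: maximal number of sign changes over all ways of replacing
each zero entry by `1` or `-1`. -/
noncomputable def sPlus (n : ℕ) (x : Fin n → ℝ) : ℕ :=
  Finset.univ.sup (fun ε : Fin n → Bool =>
    signChanges ((List.finRange n).map (fun i =>
      if x i = 0 then (if ε i then (1:ℝ) else -1) else x i)))

lemma signChanges_nil : signChanges [] = 0 := rfl
lemma signChanges_single (a : ℝ) : signChanges [a] = 0 := rfl

lemma signChanges_cons_cons (a b : ℝ) (l : List ℝ) :
    signChanges (a::b::l) = (if a*b < 0 then 1 else 0) + signChanges (b::l) := by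
  simp only [signChanges, List.zip, List.zipWith, List.tail, List.filter]
  split_ifs with h <;> simp [h, Nat.add_comm]

lemma signChanges_le_cons (a : ℝ) (l : List ℝ) : signChanges l ≤ signChanges (a :: l) := by
  cases l with
  | nil => exact Nat.le_refl _
  | cons b t => rw [signChanges_cons_cons]; exact Nat.le_add_left _ _

lemma opp_sign_trans {a b c : ℝ} (ha : a ≠ 0) (hb : b ≠ 0) (hc : c ≠ 0)
    (hab : ¬ a * b < 0) (hbc : ¬ b * c < 0) : ¬ a * c < 0 := by
  have h1 : 0 < a * b := lt_of_le_of_ne (not_lt.mp hab) (Ne.symm (mul_ne_zero ha hb))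
  have h2 : 0 < b * c := lt_of_le_of_ne (not_lt.mp hbc) (Ne.symm (mul_ne_zero hb hc))
  intro h3
  nlinarith [sq_nonneg b, mul_pos h1 h2]

lemma signChanges_cons_le_cons_cons (a b : ℝ) (l : List ℝ) (ha : a ≠ 0) (hb : b ≠ 0)
    (hl : ∀ x ∈ l, x ≠ 0) :
    signChanges (a :: l) ≤ signChanges (a :: b :: l) := by
  cases l with
  | nil => rw [signChanges_single]; exact Nat.zero_le _
  | cons c t =>
    have hc : c ≠ 0 := hl c List.mem_cons_self
    rw [signChanges_cons_cons a c, signChanges_cons_cons a b, signChanges_cons_cons b c]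
    have key : (if a*c < 0 then 1 else 0) ≤ (if a*b < 0 then 1 else 0) + (if b*c < 0 then 1 else 0) := by
      split_ifs <;> try omega
      exact absurd ‹a*c < 0› (opp_sign_trans ha hb hc ‹¬ a*b < 0› ‹¬ b*c < 0›)
    omega

lemma sublist_aux {l' l : List ℝ} (h : l'.Sublist l) :
    (∀ x ∈ l, x ≠ 0) → ∀ a, a ≠ 0 → signChanges (a :: l') ≤ signChanges (a :: l) := by
  induction h with
  | slnil => intro _ a _; exact Nat.le_refl _
  | @cons l₁ l₂ b h ih =>
    intro hl a ha
    have hb : b ≠ 0 := hl b List.mem_cons_self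
    have hl' : ∀ x ∈ l₂, x ≠ 0 := fun x hx => hl x (List.mem_cons_of_mem _ hx)
    exact le_trans (ih hl' a ha) (signChanges_cons_le_cons_cons a b _ ha hb hl')
  | @cons_cons l₁ l₂ b h ih =>
    intro hl a ha
    have hb : b ≠ 0 := hl b List.mem_cons_self
    have hl' : ∀ x ∈ l₂, x ≠ 0 := fun x hx => hl x (List.mem_cons_of_mem _ hx)
    rw [signChanges_cons_cons, signChanges_cons_cons]
    exact Nat.add_le_add_left (ih hl' b hb) _

lemma signChanges_sublist {l' l : List ℝ} (h : l'.Sublist l) (hl : ∀ x ∈ l, x ≠ 0) :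
    signChanges l' ≤ signChanges l := by
  induction h with
  | slnil => exact Nat.le_refl _
  | cons b h ih =>
    exact le_trans (ih (fun x hx => hl x (List.mem_cons_of_mem _ hx)))
      (signChanges_le_cons b _)
  | cons_cons b h _ =>
    exact sublist_aux h (fun x hx => hl x (List.mem_cons_of_mem _ hx)) b
      (hl b List.mem_cons_self)

lemma signChanges_congr {l₁ l₂ : List ℝ} (h : List.Forall₂ (fun a b => 0 < a * b) l₁ l₂) :
    signChanges l₁ = signChanges l₂ := by
  induction h with
  | nil => rfl
  | @cons a b t₁ t₂ hab h ih =>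
    cases h with
    | nil => rfl
    | @cons a' b' t₁' t₂' hab' h' =>
      rw [signChanges_cons_cons, signChanges_cons_cons, ih]
      congr 1
      have : a * a' < 0 ↔ b * b' < 0 := by
        constructor <;> intro hh <;> nlinarith
      simp [this]

lemma filter_sublist_replace {n : ℕ} (x : Fin n → ℝ) (e : Fin n → ℝ) (l : List (Fin n)) :
    ((l.map x).filter (fun a => decide (a ≠ 0))).Sublist
      (l.map (fun i => if x i = 0 then e i else x i)) := by
  induction l with
  | nil => exact List.Sublist.refl _
  | cons i t ih =>
    simp only [List.map_cons, List.filter_cons]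
    by_cases h : x i = 0
    · have h2 : (decide (x i ≠ 0)) = false := by simp [h]
      rw [h2, if_neg (by simp), if_pos h]
      exact ih.cons _
    · have h2 : (decide (x i ≠ 0)) = true := by simp [h]
      rw [h2, if_pos rfl, if_neg h]
      exact ih.cons₂ _

lemma sMinus_le_sPlus {n : ℕ} (x : Fin n → ℝ) : sMinus n x ≤ sPlus n x := by
  have h1 : sMinus n x ≤ signChanges ((List.finRange n).map (fun i =>
      if x i = 0 then (if (fun _ : Fin n => true) i then (1:ℝ) else -1) else x i)) := by
    apply signChanges_sublist (filter_sublist_replace x _ _)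
    intro a ha
    simp only [List.mem_map] at ha
    obtain ⟨i, _, rfl⟩ := ha
    by_cases h : x i = 0 <;> simp [h]
  exact le_trans h1 (Finset.le_sup (f := fun ε : Fin n → Bool =>
    signChanges ((List.finRange n).map (fun i =>
      if x i = 0 then (if ε i then (1:ℝ) else -1) else x i)))
    (Finset.mem_univ (fun _ : Fin n => true)))

lemma forall₂_map_map {α β : Type*} (f g : α → β) (R : β → β → Prop) (l : List α)
    (h : ∀ i ∈ l, R (f i) (g i)) : List.Forall₂ R (l.map f) (l.map g) := by
  induction l with
  | nil => simp
  | cons a t ih =>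
    simp only [List.map_cons]
    exact List.Forall₂.cons (h a List.mem_cons_self)
      (ih fun i hi => h i (List.mem_cons_of_mem _ hi))

lemma sPlus_le_of_close {n : ℕ} (x y : Fin n → ℝ)
    (h : ∀ i, x i ≠ 0 → y i ≠ 0 ∧ 0 < x i * y i) : sPlus n y ≤ sPlus n x := by
  apply Finset.sup_le
  intro ε _
  set ε' : Fin n → Bool := fun i => if y i = 0 then ε i else decide (0 < y i) with hε'
  have key : signChanges ((List.finRange n).map (fun i =>
      if y i = 0 then (if ε i then (1:ℝ) else -1) else y i)) =
      signChanges ((List.finRange n).map (fun i =>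
      if x i = 0 then (if ε' i then (1:ℝ) else -1) else x i)) := by
    apply signChanges_congr
    apply forall₂_map_map
    intro i _
    by_cases hx : x i = 0
    · rw [if_pos hx]
      by_cases hy : y i = 0
      · rw [if_pos hy]
        have : ε' i = ε i := by rw [hε']; simp [hy]
        rw [this]
        by_cases hεi : ε i <;> simp [hεi]
      · rw [if_neg hy]
        have : ε' i = decide (0 < y i) := by rw [hε']; simp [hy]
        rw [this]
        rcases lt_or_gt_of_ne hy with h1 | h1
        · rw [if_neg (by simp [not_lt.mpr h1.le])]
          nlinarith
        · rw [if_pos (by simp [h1])]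
          nlinarith
    · obtain ⟨hy, hxy⟩ := h i hx
      rw [if_neg hx, if_neg hy]
      linarith [hxy, mul_comm (x i) (y i)]
  rw [key]
  exact Finset.le_sup (f := fun ε : Fin n → Bool =>
    signChanges ((List.finRange n).map (fun i =>
      if x i = 0 then (if ε i then (1:ℝ) else -1) else x i))) (Finset.mem_univ ε')

lemma exists_delta {n : ℕ} (x : Fin n → ℝ) : ∃ δ > 0, ∀ i, x i ≠ 0 → δ ≤ |x i| := by
  rcases isEmpty_or_nonempty (Fin n) with h | h
  · exact ⟨1, one_pos, fun i => isEmptyElim i⟩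
  · refine ⟨Finset.univ.inf' Finset.univ_nonempty (fun i => if x i = 0 then 1 else |x i|),
      ?_, ?_⟩
    · rw [gt_iff_lt, Finset.lt_inf'_iff]
      intro i _
      split_ifs with hi
      · exact one_pos
      · exact abs_pos.mpr hi
    · intro i hi
      have := Finset.inf'_le (fun i => if x i = 0 then 1 else |x i|) (Finset.mem_univ i)
      rwa [if_neg hi] at this

lemma close_signs {n : ℕ} {x y : Fin n → ℝ} {δ : ℝ}
    (hδ : ∀ i, x i ≠ 0 → δ ≤ |x i|) (hd : dist y x < δ) :
    ∀ i, x i ≠ 0 → y i ≠ 0 ∧ 0 < x i * y i := by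
  intro i hi
  have h1 : dist (y i) (x i) < δ := lt_of_le_of_lt (dist_le_pi_dist y x i) hd
  rw [Real.dist_eq] at h1
  have h2 : |y i - x i| < |x i| := lt_of_lt_of_le h1 (hδ i hi)
  rw [abs_lt] at h2
  rcases lt_or_gt_of_ne hi with hx | hx
  · rw [abs_of_neg hx] at h2
    have hy : y i < 0 := by linarith [h2.2]
    exact ⟨ne_of_lt hy, mul_pos_of_neg_of_neg hx hy⟩
  · rw [abs_of_pos hx] at h2
    have hy : 0 < y i := by linarith [h2.1]
    exact ⟨ne_of_gt hy, mul_pos hx hy⟩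

lemma exists_close {n : ℕ} (x : Fin n → ℝ) {δ : ℝ} (hδ : 0 < δ) :
    ∃ y : Fin n → ℝ, dist y x < δ ∧ sPlus n x ≤ sMinus n y := by
  obtain ⟨ε, _, hε⟩ := Finset.exists_mem_eq_sup (Finset.univ : Finset (Fin n → Bool))
    Finset.univ_nonempty (fun ε : Fin n → Bool => signChanges ((List.finRange n).map (fun i =>
      if x i = 0 then (if ε i then (1:ℝ) else -1) else x i)))
  set y : Fin n → ℝ := fun i => if x i = 0 then (if ε i then δ/2 else -(δ/2)) else x i with hy
  have hyne : ∀ i, y i ≠ 0 := by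
    intro i
    rw [hy]
    by_cases hx : x i = 0
    · by_cases hεi : ε i <;> simp [hx, hεi] <;> linarith
    · simp [hx, hx]
  refine ⟨y, ?_, ?_⟩
  · rw [dist_pi_lt_iff hδ]
    intro i
    rw [Real.dist_eq, hy]
    by_cases hx : x i = 0
    · by_cases hεi : ε i <;> rw [hx] <;> simp [hx, hεi, abs_of_pos, abs_of_nonneg] <;>
        rw [abs_of_pos (by linarith)] <;> linarith
    · simp [hx, hδ]
  · have hfilter : ((List.finRange n).map y).filter (fun a => decide (a ≠ 0)) =
        (List.finRange n).map y := by
      rw [List.filter_eq_self]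
      intro a ha
      simp only [List.mem_map] at ha
      obtain ⟨i, _, rfl⟩ := ha
      simp [hyne i]
    rw [sMinus, hfilter, sPlus, hε]
    apply le_of_eq
    apply signChanges_congr
    apply forall₂_map_map
    intro i _
    by_cases hx : x i = 0
    · by_cases hεi : ε i <;> simp [hy, hx, hεi] <;> nlinarith
    · simp only [hy, if_neg hx]
      exact mul_self_pos.mpr hx

theorem stmt2 (n k : ℕ) (hk1 : 1 ≤ k) (hk2 : k ≤ n - 1) :
    {x : Fin n → ℝ | sPlus n x ≤ k - 1} =
      interior {x : Fin n → ℝ | sMinus n x ≤ k - 1} := by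
  apply Set.Subset.antisymm
  · apply interior_maximal
    · intro x hx
      exact le_trans (sMinus_le_sPlus x) hx
    · rw [Metric.isOpen_iff]
      intro x hx
      obtain ⟨δ, hδpos, hδ⟩ := exists_delta x
      refine ⟨δ, hδpos, fun y hy => ?_⟩
      rw [Metric.mem_ball] at hy
      exact le_trans (sPlus_le_of_close x y (close_signs hδ hy)) hx
  · intro x hx
    rw [mem_interior_iff_mem_nhds, Metric.mem_nhds_iff] at hx
    obtain ⟨δ, hδpos, hδ⟩ := hx
    obtain ⟨y, hyd, hys⟩ := exists_close x hδpos
    exact le_trans hys (hδ (Metric.mem_ball.mpr hyd))
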